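/- Let f: ℝ^p → ℝ be L-smooth and μ-strongly convex, and let β ∈ [0, μ]. Then for all x, y in ℝ^p, ‖∇f(x) - ∇f(y) - β(x - y)‖² ≤ 2L (f(x) - f(y) - ⟨∇f(y), x - y⟩). -/

import Mathlib

open RealInnerProductSpace

section Aux

variable {F : Type*} [NormedAddCommGroup F] [InnerProductSpace ℝ F] [CompleteSpace F]

lemma aux_hasDerivAt (g : F → ℝ) (g' : F → F) (hg : ∀ x, HasGradientAt g (g' x) x)
    (x d : F) (t : ℝ) :
    HasDerivAt (fun t : ℝ => g (x + t • d)) ⟪g' (x + t • d), d⟫ t := by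
  have h1 : HasDerivAt (fun t : ℝ => x + t • d) d t := by
    simpa using ((hasDerivAt_id t).smul_const d).const_add x
  have h2 := (hasGradientAt_iff_hasFDerivAt.mp (hg (x + t • d)))
  have h3 := h2.comp_hasDerivAt t h1
  exact h3

lemma hasGradientAt_const_mul_normSq (c : ℝ) (x : F) :
    HasGradientAt (fun z : F => c * ‖z‖ ^ 2) ((2 * c) • x) x := by
  rw [hasGradientAt_iff_hasFDerivAt]
  have h1 : HasFDerivAt (fun z : F => ⟪z, z⟫)
      ((fderivInnerCLM ℝ (x, x)).comp
        ((ContinuousLinearMap.id ℝ F).prod (ContinuousLinearMap.id ℝ F))) x :=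
    (hasFDerivAt_id x).inner ℝ (hasFDerivAt_id x)
  have h2 := h1.const_mul c
  have h3 : (fun z : F => c * ⟪z, z⟫) = fun z : F => c * ‖z‖ ^ 2 := by
    funext z; rw [real_inner_self_eq_norm_sq]
  rw [h3] at h2
  refine h2.congr_fderiv ?_
  ext v
  simp [real_inner_smul_left, real_inner_comm]
  ring

lemma HasGradientAt.sub' {f₁ f₂ : F → ℝ} {g₁ g₂ x : F}
    (h₁ : HasGradientAt f₁ g₁ x) (h₂ : HasGradientAt f₂ g₂ x) :
    HasGradientAt (fun z => f₁ z - f₂ z) (g₁ - g₂) x := by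
  rw [hasGradientAt_iff_hasFDerivAt] at *
  exact (h₁.sub h₂).congr_fderiv (map_sub _ _ _).symm

lemma first_order (g : F → ℝ) (g' : F → F) (hg : ∀ x, HasGradientAt g (g' x) x)
    (hc : ConvexOn ℝ Set.univ g) (x z : F) :
    ⟪g' x, z - x⟫ ≤ g z - g x := by
  set d := z - x with hd
  set φ : ℝ → ℝ := fun t => g (x + t • d) with hφ
  have hder : HasDerivAt φ ⟪g' x, d⟫ 0 := by
    simpa using aux_hasDerivAt g g' hg x d 0
  have htend : Filter.Tendsto (slope φ 0) (nhdsWithin 0 (Set.Ioi 0)) (nhds ⟪g' x, d⟫) :=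
    (hasDerivAt_iff_tendsto_slope.mp hder).mono_left
      (nhdsWithin_mono _ fun t ht => ne_of_gt ht)
  refine le_of_tendsto htend ?_
  filter_upwards [Ioc_mem_nhdsGT_of_mem (Set.mem_Ico.mpr ⟨le_refl 0, one_pos⟩)] with t ht
  have hφ0 : φ 0 = g x := by simp [hφ]
  have h01 : φ t ≤ (1 - t) * g x + t * g z := by
    have h := hc.2 (Set.mem_univ x) (Set.mem_univ z)
      (by linarith [ht.2] : (0:ℝ) ≤ 1 - t) (le_of_lt ht.1) (by ring)
    calc φ t = g ((1 - t) • x + t • z) := by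
          show g (x + t • d) = g ((1 - t) • x + t • z)
          rw [hd]
          congr 1
          module
      _ ≤ (1 - t) * g x + t * g z := by simpa using h
  have hs : slope φ 0 t = (φ t - g x) / t := by
    rw [slope_def_field, hφ0]; ring_nf
  rw [hs, div_le_iff₀ ht.1]
  nlinarith [ht.1.le]

lemma convexOn_of_monotone_grad (h : F → ℝ) (h' : F → F)
    (hd : ∀ x, HasGradientAt h (h' x) x)
    (hm : ∀ a b : F, 0 ≤ ⟪h' a - h' b, a - b⟫) :
    ConvexOn ℝ Set.univ h := by
  refine ⟨convex_univ, fun x _ y _ a b ha hb hab => ?_⟩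
  set d := y - x with hdd
  set φ : ℝ → ℝ := fun t => h (x + t • d) with hφ
  have hder : ∀ t : ℝ, HasDerivAt φ ⟪h' (x + t • d), d⟫ t :=
    fun t => aux_hasDerivAt h h' hd x d t
  have hconvφ : ConvexOn ℝ Set.univ φ := by
    apply MonotoneOn.convexOn_of_deriv convex_univ
    · exact fun t _ => (hder t).continuousAt.continuousWithinAt
    · intro t _; exact (hder t).differentiableAt.differentiableWithinAt
    · intro s _ t _ hst
      rw [(hder s).deriv, (hder t).deriv]
      have hmm := hm (x + t • d) (x + s • d)
      have he : (x + t • d) - (x + s • d) = (t - s) • d := by module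
      rw [he, real_inner_smul_right, inner_sub_left] at hmm
      rcases eq_or_lt_of_le hst with rfl | hlt
      · exact le_refl _
      · nlinarith
  have hx0 : φ 0 = h x := by simp [hφ]
  have hy1 : φ 1 = h y := by
    simp only [hφ, one_smul, hdd]
    congr 1
    module
  have key := hconvφ.2 (Set.mem_univ (0:ℝ)) (Set.mem_univ (1:ℝ)) ha hb hab
  simp only [smul_eq_mul, mul_zero, mul_one, zero_add, hx0, hy1] at key
  calc h (a • x + b • y) = φ b := by
        rw [hφ]
        congr 1
        have hab' : a = 1 - b := by linarith
        rw [hab', hdd]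
        module
    _ ≤ a * h x + b * h y := key

lemma cocoercive (g : F → ℝ) (g' : F → F) (hg : ∀ x, HasGradientAt g (g' x) x)
    (hc : ConvexOn ℝ Set.univ g) (K : ℝ) (hK : 0 < K)
    (hsm : ConvexOn ℝ Set.univ (fun z => K / 2 * ‖z‖ ^ 2 - g z)) (x y : F) :
    ‖g' x - g' y‖ ^ 2 ≤ 2 * K * (g x - g y - ⟪g' y, x - y⟫) := by
  set w := g' x - g' y with hw
  set u := x - K⁻¹ • w with hu
  -- gradient of the smooth-gap function
  have hgap : ∀ z : F, HasGradientAt (fun z => K / 2 * ‖z‖ ^ 2 - g z) (K • z - g' z) z := by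
    intro z
    have h1 := hasGradientAt_const_mul_normSq (K / 2) z
    rw [show (2 * (K / 2)) = K by ring] at h1
    exact h1.sub' (hg z)
  have hA := first_order g g' hg hc y u
  have hB := first_order _ _ hgap hsm x u
  -- expand hB
  have hux : u - x = -(K⁻¹ • w) := by rw [hu]; abel
  have hBi : ⟪K • x - g' x, u - x⟫ = -(K * (K⁻¹ * ⟪x, w⟫)) + K⁻¹ * ⟪g' x, w⟫ := by
    rw [hux, inner_neg_right, inner_sub_left, real_inner_smul_left,
      real_inner_smul_right, real_inner_smul_right]
    ring
  have hnux : ‖u - x‖ ^ 2 = K⁻¹ ^ 2 * ‖w‖ ^ 2 := by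
    rw [hux, norm_neg, norm_smul, Real.norm_eq_abs, abs_of_pos (inv_pos.mpr hK), mul_pow]
  have hnu : ‖u‖ ^ 2 = ‖x‖ ^ 2 + 2 * ⟪x, u - x⟫ + ‖u - x‖ ^ 2 := by
    have h := norm_add_sq_real x (u - x)
    rw [show x + (u - x) = u by abel] at h
    exact h
  have hxux : ⟪x, u - x⟫ = -(K⁻¹ * ⟪x, w⟫) := by
    rw [hux, inner_neg_right, real_inner_smul_right]
  -- expand hA
  have hAy : u - y = (x - y) - K⁻¹ • w := by rw [hu]; abel
  have hAi : ⟪g' y, u - y⟫ = ⟪g' y, x - y⟫ - K⁻¹ * ⟪g' y, w⟫ := by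
    rw [hAy, inner_sub_right, real_inner_smul_right]
  have hwsq : ⟪g' x, w⟫ - ⟪g' y, w⟫ = ‖w‖ ^ 2 := by
    rw [← inner_sub_left, ← hw, real_inner_self_eq_norm_sq]
  rw [hAi] at hA
  rw [hBi, hnu, hnux, hxux] at hB
  have hKK : K * K⁻¹ = 1 := mul_inv_cancel₀ (ne_of_gt hK)
  have hKc1 : K * (K⁻¹ * ⟪x, w⟫) = ⟪x, w⟫ := by rw [← mul_assoc, hKK, one_mul]
  have hKc2 : K / 2 * (K⁻¹ ^ 2 * ‖w‖ ^ 2) = K⁻¹ / 2 * ‖w‖ ^ 2 := by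
    field_simp
  have hB' : K⁻¹ * ⟪g' x, w⟫ ≤ K⁻¹ / 2 * ‖w‖ ^ 2 - g u + g x := by nlinarith [hB, hKc1, hKc2]
  have hcw : K⁻¹ * (⟪g' x, w⟫ - ⟪g' y, w⟫) = K⁻¹ * ‖w‖ ^ 2 := by rw [hwsq]
  have hgoal : K⁻¹ / 2 * ‖w‖ ^ 2 ≤ g x - g y - ⟪g' y, x - y⟫ := by nlinarith [hA, hB', hcw]
  have := mul_le_mul_of_nonneg_left hgoal (by positivity : (0:ℝ) ≤ 2 * K)
  calc ‖w‖ ^ 2 = 2 * K * (K⁻¹ / 2 * ‖w‖ ^ 2) := by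
        field_simp
    _ ≤ 2 * K * (g x - g y - ⟪g' y, x - y⟫) := this

end Aux

theorem stmt3 {p : ℕ} (f : EuclideanSpace ℝ (Fin p) → ℝ)
    (f' : EuclideanSpace ℝ (Fin p) → EuclideanSpace ℝ (Fin p)) (L μ β : ℝ)
    (hdiff : ∀ x, HasGradientAt f (f' x) x)
    (hL0 : 0 ≤ L) (hlip : LipschitzWith L.toNNReal f')
    (hconv : ConvexOn ℝ Set.univ (fun x => f x - μ / 2 * ‖x‖ ^ 2))
    (hβ0 : 0 ≤ β) (hβμ : β ≤ μ) (hμL : μ ≤ L) :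
    ∀ x y : EuclideanSpace ℝ (Fin p),
      ‖f' x - f' y - β • (x - y)‖ ^ 2
        ≤ 2 * L * (f x - f y - ⟪f' y, x - y⟫) := by
  intro x y
  have hlip' : ∀ a b, ‖f' a - f' b‖ ≤ L * ‖a - b‖ := by
    intro a b
    have := hlip.dist_le_mul a b
    rwa [dist_eq_norm, dist_eq_norm, Real.coe_toNNReal L hL0] at this
  rcases hL0.eq_or_lt with hL | hL
  · -- L = 0
    have hβ : β = 0 := le_antisymm (hβμ.trans (hμL.trans hL.ge)) hβ0
    have hfeq : f' x = f' y := by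
      have := hlip' x y
      rw [← hL, zero_mul] at this
      have h0 : ‖f' x - f' y‖ = 0 := le_antisymm this (norm_nonneg _)
      rwa [norm_sub_eq_zero_iff] at h0
    rw [hβ, hfeq, ← hL]
    simp
  · -- 0 < L
    set g : EuclideanSpace ℝ (Fin p) → ℝ := fun z => f z - β / 2 * ‖z‖ ^ 2 with hgdef
    set g' : EuclideanSpace ℝ (Fin p) → EuclideanSpace ℝ (Fin p) :=
      fun z => f' z - β • z with hg'def
    have hgrad : ∀ z, HasGradientAt g (g' z) z := by
      intro z
      have h1 := hasGradientAt_const_mul_normSq (β / 2) z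
      rw [show (2 * (β / 2)) = β by ring] at h1
      exact (hdiff z).sub' h1
    have hgc : ConvexOn ℝ Set.univ g :=
      strongConvexOn_iff_convex.mp
        (StrongConvexOn.mono hβμ (strongConvexOn_iff_convex.mpr hconv))
    have hsm : ConvexOn ℝ Set.univ (fun z => L / 2 * ‖z‖ ^ 2 - g z) := by
      apply convexOn_of_monotone_grad _ (fun z => L • z - g' z)
      · intro z
        have h1 := hasGradientAt_const_mul_normSq (L / 2) z
        rw [show (2 * (L / 2)) = L by ring] at h1
        exact h1.sub' (hgrad z)
      · intro a b
        have hab : (L • a - g' a) - (L • b - g' b)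
            = (L + β) • (a - b) - (f' a - f' b) := by
          simp only [hg'def]
          module
        rw [hab, inner_sub_left, real_inner_smul_left, real_inner_self_eq_norm_sq]
        have hcs : ⟪f' a - f' b, a - b⟫ ≤ ‖f' a - f' b‖ * ‖a - b‖ :=
          real_inner_le_norm _ _
        have hl := hlip' a b
        nlinarith [norm_nonneg (a - b), norm_nonneg (f' a - f' b), sq_nonneg ‖a - b‖]
    have hco := cocoercive g g' hgrad hgc L hL hsm x y
    have hwid : g' x - g' y = f' x - f' y - β • (x - y) := by
      simp only [hg'def]
      module
    rw [hwid] at hco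
    refine hco.trans ?_
    apply mul_le_mul_of_nonneg_left _ (by positivity : (0:ℝ) ≤ 2 * L)
    -- g-Bregman ≤ f-Bregman
    have hgi : ⟪g' y, x - y⟫ = ⟪f' y, x - y⟫ - β * ⟪y, x - y⟫ := by
      simp only [hg'def]
      rw [inner_sub_left, real_inner_smul_left]
    have hn : ‖x - y‖ ^ 2 = ‖x‖ ^ 2 - 2 * ⟪x, y⟫ + ‖y‖ ^ 2 := norm_sub_sq_real x y
    have hyxy : ⟪y, x - y⟫ = ⟪x, y⟫ - ‖y‖ ^ 2 := by
      rw [inner_sub_right, real_inner_self_eq_norm_sq, real_inner_comm]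
    simp only [hgdef]
    rw [hgi, hyxy]
    nlinarith [sq_nonneg ‖x - y‖, hn, mul_nonneg hβ0 (sq_nonneg ‖x - y‖)]
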